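/- Let g : ℝ^N → ℝ be differentiable and u-strongly concave on the relevant domain: g(y) ≤ g(x) + ⟨∇g(x), y - x⟩ - (u/2)‖y - x‖² for x, y nonnegative with sparsity at most m̄. Let γ_S be the maximizer of g over nonnegative vectors supported on S (so KKT gives (γ_S)_j > 0 ⟹ ∂_j g(γ_S) = 0 and (γ_S)_j = 0, j ∈ S ⟹ ∂_j g(γ_S) ≤ 0). Then for S, A disjoint with |S| + |A| = m̄, and F(S) = g(γ_S) - g(0): F(S ∪ A) - F(S) ≤ (1/(2u))·Σ_{j∈A} (max(∂_j g(γ_S), 0))². -/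

import Mathlib

lemma quad_bound (u a b : ℝ) (hu : 0 < u) (hb : 0 ≤ b) :
    a * b - u / 2 * b ^ 2 ≤ (max a 0) ^ 2 / (2 * u) := by
  have h1 : a * b ≤ max a 0 * b := mul_le_mul_of_nonneg_right (le_max_left a 0) hb
  rw [div_eq_mul_inv, mul_comm, ← div_eq_mul_inv, le_div_iff₀ (by positivity)]
  nlinarith [sq_nonneg (max a 0 - u * b)]

/-- Marginal-gain upper bound (Lemma A3, abstract form): if `g` is differentiable
and `u`-strongly concave on nonnegative vectors of sparsity at most `m̄`, and
`γS`, `γSA` maximize `g` over nonnegative vectors supported on `S` and `S ∪ A`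
respectively (with the KKT conditions at `γS`), then for disjoint `S, A` with
`|S| + |A| = m̄`:  `F(S∪A) - F(S) ≤ (1/(2u))·Σ_{j∈A}(max(∂_j g(γS), 0))²`. -/
theorem stmt_11 (N : ℕ) (g : EuclideanSpace ℝ (Fin N) → ℝ) (hg : Differentiable ℝ g)
    (u : ℝ) (hu : 0 < u) (mbar : ℕ)
    (hconc : ∀ x y : EuclideanSpace ℝ (Fin N),
      (∀ v, 0 ≤ x v) → (Finset.univ.filter (fun v => x v ≠ 0)).card ≤ mbar →
      (∀ v, 0 ≤ y v) → (Finset.univ.filter (fun v => y v ≠ 0)).card ≤ mbar →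
      g y ≤ g x + inner ℝ (gradient g x) (y - x) - u / 2 * ‖y - x‖ ^ 2)
    (S A : Finset (Fin N)) (hdisj : Disjoint S A) (hcard : S.card + A.card = mbar)
    (γS γSA : EuclideanSpace ℝ (Fin N))
    (hγS : ((∀ v, 0 ≤ γS v) ∧ ∀ v ∉ S, γS v = 0) ∧
      ∀ x : EuclideanSpace ℝ (Fin N), ((∀ v, 0 ≤ x v) ∧ ∀ v ∉ S, x v = 0) → g x ≤ g γS)
    (hKKT₁ : ∀ j, 0 < γS j → gradient g γS j = 0)
    (hKKT₂ : ∀ j ∈ S, γS j = 0 → gradient g γS j ≤ 0)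
    (hγSA : ((∀ v, 0 ≤ γSA v) ∧ ∀ v ∉ S ∪ A, γSA v = 0) ∧
      ∀ x : EuclideanSpace ℝ (Fin N), ((∀ v, 0 ≤ x v) ∧ ∀ v ∉ S ∪ A, x v = 0) →
        g x ≤ g γSA) :
    (g γSA - g 0) - (g γS - g 0)
      ≤ 1 / (2 * u) * ∑ j ∈ A, (max (gradient g γS j) 0) ^ 2 := by
  obtain ⟨⟨hSpos, hSsupp⟩, -⟩ := hγS
  obtain ⟨⟨hSApos, hSAsupp⟩, -⟩ := hγSA
  set d : EuclideanSpace ℝ (Fin N) := gradient g γS with hd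
  -- support cardinality bounds
  have hsubS : (Finset.univ.filter (fun v => γS v ≠ 0)) ⊆ S := by
    intro v hv
    simp only [Finset.mem_filter] at hv
    by_contra h
    exact hv.2 (hSsupp v h)
  have hsubSA : (Finset.univ.filter (fun v => γSA v ≠ 0)) ⊆ S ∪ A := by
    intro v hv
    simp only [Finset.mem_filter] at hv
    by_contra h
    exact hv.2 (hSAsupp v h)
  have hcardS : (Finset.univ.filter (fun v => γS v ≠ 0)).card ≤ mbar :=
    le_trans (Finset.card_le_card hsubS) (by omega)
  have hcardSA : (Finset.univ.filter (fun v => γSA v ≠ 0)).card ≤ mbar := by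
    refine le_trans (Finset.card_le_card hsubSA) ?_
    rw [Finset.card_union_of_disjoint hdisj]; omega
  have hmain := hconc γS γSA hSpos hcardS hSApos hcardSA
  -- rewrite inner product and norm as sums
  have hinner : (inner ℝ d (γSA - γS) : ℝ) = ∑ j, d j * (γSA j - γS j) := by
    rw [PiLp.inner_apply]
    simp [RCLike.inner_apply, PiLp.sub_apply, mul_comm]
  have hnorm : ‖γSA - γS‖ ^ 2 = ∑ j, (γSA j - γS j) ^ 2 := by
    rw [← real_inner_self_eq_norm_sq, PiLp.inner_apply]
    simp [RCLike.inner_apply, PiLp.sub_apply, sq]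
  have key : (inner ℝ d (γSA - γS) : ℝ) - u / 2 * ‖γSA - γS‖ ^ 2
      ≤ 1 / (2 * u) * ∑ j ∈ A, (max (d j) 0) ^ 2 := by
    rw [hinner, hnorm, Finset.mul_sum, ← Finset.sum_sub_distrib]
    have step : ∑ j, (d j * (γSA j - γS j) - u / 2 * (γSA j - γS j) ^ 2)
        ≤ ∑ j, (if j ∈ A then (max (d j) 0) ^ 2 / (2 * u) else 0) := by
      apply Finset.sum_le_sum
      intro j _
      by_cases hjA : j ∈ A
      · simp only [hjA, if_true]
        have hjS : j ∉ S := Finset.disjoint_right.mp hdisj hjA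
        have hz : γS j = 0 := hSsupp j hjS
        have hb : 0 ≤ γSA j - γS j := by rw [hz]; simpa using hSApos j
        exact quad_bound u (d j) (γSA j - γS j) hu hb
      · simp only [hjA, if_false]
        by_cases hjS : j ∈ S
        · rcases lt_or_eq_of_le (hSpos j) with hpos | hzero
          · have : d j = 0 := hKKT₁ j hpos
            rw [this]
            nlinarith [sq_nonneg (γSA j - γS j)]
          · have hdle : d j ≤ 0 := hKKT₂ j hjS hzero.symm
            have hb : 0 ≤ γSA j - γS j := by rw [← hzero]; simpa using hSApos j
            nlinarith [sq_nonneg (γSA j - γS j), mul_nonpos_of_nonpos_of_nonneg hdle hb]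
        · have h1 : γS j = 0 := hSsupp j hjS
          have h2 : γSA j = 0 := hSAsupp j (by simp [hjS, hjA])
          rw [h1, h2]
          norm_num
    refine le_trans step ?_
    rw [Finset.sum_ite_mem, Finset.univ_inter, Finset.mul_sum]
    refine le_of_eq (Finset.sum_congr rfl fun j _ => ?_)
    field_simp
  linarith [hmain, key]
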